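/- There is an absolute constant C ≤ 2 such that for all vectors n, m ∈ ℝ³ one has |⟨n + m⟩ − ⟨m⟩ − (n·m)/⟨m⟩| ≤ C ⟨n⟩²/⟨m⟩. -/

import Mathlib

open scoped RealInnerProductSpace

/-- Japanese bracket of `x ∈ ℝ³`: `⟨x⟩ = (1 + |x|²)^{1/2}`. -/
noncomputable def jbE (x : EuclideanSpace ℝ (Fin 3)) : ℝ :=
  Real.sqrt (1 + ‖x‖ ^ 2)

lemma jbE_sq (x : EuclideanSpace ℝ (Fin 3)) : jbE x ^ 2 = 1 + ‖x‖ ^ 2 := by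
  unfold jbE
  rw [Real.sq_sqrt]
  positivity

lemma jbE_nonneg (x : EuclideanSpace ℝ (Fin 3)) : 0 ≤ jbE x := Real.sqrt_nonneg _

lemma jbE_one_le (x : EuclideanSpace ℝ (Fin 3)) : 1 ≤ jbE x := by
  nlinarith [jbE_sq x, jbE_nonneg x, sq_nonneg ‖x‖]

lemma norm_le_jbE (x : EuclideanSpace ℝ (Fin 3)) : ‖x‖ ≤ jbE x := by
  nlinarith [jbE_sq x, jbE_nonneg x, norm_nonneg x]

set_option maxHeartbeats 1600000 in
theorem bracket_taylor_remainder :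
    ∃ C : ℝ, 0 < C ∧ C ≤ 2 ∧ ∀ n m : EuclideanSpace ℝ (Fin 3),
      |jbE (n + m) - jbE m - ⟪n, m⟫ / jbE m| ≤ C * jbE n ^ 2 / jbE m := by
  refine ⟨2, by norm_num, le_refl _, fun n m => ?_⟩
  set a := jbE (n + m) with ha
  set b := jbE m with hb
  set N := jbE n with hN
  set p : ℝ := ⟪n, m⟫ with hp
  have ha2 : a ^ 2 = 1 + ‖n + m‖ ^ 2 := jbE_sq _
  have hb2 : b ^ 2 = 1 + ‖m‖ ^ 2 := jbE_sq _
  have hb1 : (1 : ℝ) ≤ b := jbE_one_le _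
  have ha0 : (1 : ℝ) ≤ a := jbE_one_le _
  have hN0 : (1 : ℝ) ≤ N := jbE_one_le _
  have hmn : ‖n + m‖ ≤ a := norm_le_jbE _
  have hmb : ‖m‖ ≤ b := norm_le_jbE _
  have hnN : ‖n‖ ≤ N := norm_le_jbE _
  have hexp : ‖n + m‖ ^ 2 = ‖n‖ ^ 2 + 2 * p + ‖m‖ ^ 2 := by
    rw [hp]; exact norm_add_sq_real n m
  have hkey : a ^ 2 - b ^ 2 = ‖n‖ ^ 2 + 2 * p := by
    rw [ha2, hb2, hexp]; ring
  have hpb : |p| ≤ ‖n‖ * ‖m‖ := abs_real_inner_le_norm n m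
  -- |a - b| ≤ ‖n‖
  have htri : |‖n + m‖ - ‖m‖| ≤ ‖n‖ := by
    have h := abs_norm_sub_norm_le (n + m) m
    simpa using h
  have habs : |a - b| ≤ ‖n‖ := by
    rw [abs_le] at htri ⊢
    constructor
    · nlinarith [htri.1, htri.2, norm_nonneg (n + m), norm_nonneg m]
    · nlinarith [htri.1, htri.2, norm_nonneg (n + m), norm_nonneg m]
  set x1 : ℝ := ‖n‖ with hx1
  set x2 : ℝ := ‖m‖ with hx2
  set x3 : ℝ := ‖n + m‖ with hx3
  have hx1n : 0 ≤ x1 := norm_nonneg n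
  have hx2n : 0 ≤ x2 := norm_nonneg m
  have hx3n : 0 ≤ x3 := norm_nonneg (n + m)
  clear_value a b N p x1 x2 x3
  clear hp hx1 hx2 hx3 ha hb hN n m
  have hbpos : (0 : ℝ) < b := lt_of_lt_of_le one_pos hb1
  have habpos : (0 : ℝ) < b * (a + b) := by nlinarith
  have hE : a - b - p / b = (b * x1 ^ 2 + p * (b - a)) / (b * (a + b)) := by
    field_simp
    linear_combination b * hkey
  rw [hE, abs_div, abs_of_pos habpos, div_le_div_iff₀ habpos hbpos]
  have hnum : |b * x1 ^ 2 + p * (b - a)| ≤ 2 * b * N ^ 2 := by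
    have h1 : |b * x1 ^ 2 + p * (b - a)| ≤ |b * x1 ^ 2| + |p * (b - a)| :=
      abs_add_le _ _
    have h2 : |b * x1 ^ 2| = b * x1 ^ 2 := abs_of_nonneg (by positivity)
    have h3 : |p * (b - a)| = |p| * |b - a| := abs_mul _ _
    have h4 : |p| * |a - b| ≤ (x1 * x2) * x1 :=
      mul_le_mul hpb habs (abs_nonneg _) (by positivity)
    have hn2 : x1 ^ 2 ≤ N ^ 2 := by nlinarith
    have h6 : b * x1 ^ 2 ≤ b * N ^ 2 := by nlinarith
    have h7 : (x1 * x2) * x1 ≤ b * N ^ 2 := by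
      nlinarith
    calc |b * x1 ^ 2 + p * (b - a)| ≤ |b * x1 ^ 2| + |p * (b - a)| := h1
      _ = b * x1 ^ 2 + |p| * |a - b| := by rw [h2, h3, abs_sub_comm]
      _ ≤ b * N ^ 2 + b * N ^ 2 := add_le_add h6 (h4.trans h7)
      _ = 2 * b * N ^ 2 := by ring
  have hba : b ≤ a + b := by linarith
  calc |b * x1 ^ 2 + p * (b - a)| * b ≤ (2 * b * N ^ 2) * b :=
        mul_le_mul_of_nonneg_right hnum (le_of_lt hbpos)
    _ ≤ 2 * N ^ 2 * (b * (a + b)) := by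
        have h := mul_le_mul_of_nonneg_left hba (by positivity : (0:ℝ) ≤ 2 * N ^ 2 * b)
        nlinarith [h]
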